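/- Let Ω : ℝ → M_n(ℂ) be a differentiable matrix-valued function. Then for every t: exp(−Ω(t)) · (d/dt exp(Ω(t))) = Σ_{k=0}^{∞} (1/(k+1)!) · (−ad_{Ω(t)})^{k} (Ω'(t)), where the series converges absolutely in operator norm. -/

import Mathlib

open scoped Nat Matrix.Norms.L2Operator
open Finset
set_option linter.unusedSectionVars false
set_option maxHeartbeats 1000000

namespace DuhamelAux

variable {𝔸 : Type*} [NormedRing 𝔸] [NormedAlgebra ℂ 𝔸]

lemma norm_mul_pow_le (H A : 𝔸) (b : ℕ) : ‖H * A ^ b‖ ≤ ‖H‖ * ‖A‖ ^ b := by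
  induction b with
  | zero => simp
  | succ b ih =>
      rw [pow_succ, ← mul_assoc]
      calc ‖H * A ^ b * A‖ ≤ ‖H * A ^ b‖ * ‖A‖ := norm_mul_le _ _
        _ ≤ ‖H‖ * ‖A‖ ^ b * ‖A‖ := mul_le_mul_of_nonneg_right ih (norm_nonneg A)
        _ = ‖H‖ * ‖A‖ ^ (b + 1) := by rw [pow_succ]; ring

lemma norm_conj_le (A H : 𝔸) (a b : ℕ) : ‖A ^ a * H * A ^ b‖ ≤ ‖A‖ ^ a * ‖H‖ * ‖A‖ ^ b := by
  induction a with
  | zero => simpa using norm_mul_pow_le H A b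
  | succ a ih =>
      have h1 : A ^ (a + 1) * H * A ^ b = A * (A ^ a * (H * A ^ b)) := by
        rw [pow_succ', mul_assoc, mul_assoc]
      have ih' : ‖A ^ a * (H * A ^ b)‖ ≤ ‖A‖ ^ a * (‖H‖ * ‖A‖ ^ b) := by
        rw [← mul_assoc, ← mul_assoc]; exact ih
      rw [h1]
      calc ‖A * (A ^ a * (H * A ^ b))‖ ≤ ‖A‖ * ‖A ^ a * (H * A ^ b)‖ := norm_mul_le _ _
        _ ≤ ‖A‖ * (‖A‖ ^ a * (‖H‖ * ‖A‖ ^ b)) :=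
            mul_le_mul_of_nonneg_left ih' (norm_nonneg A)
        _ = ‖A‖ ^ (a + 1) * ‖H‖ * ‖A‖ ^ b := by rw [pow_succ]; ring

lemma alt_sum_int (m a : ℕ) (h : a ≤ m) :
    ∑ p ∈ range (a + 1), (-1 : ℤ) ^ p * ((m + 1).choose p) = (-1) ^ a * m.choose a := by
  induction a with
  | zero => simp
  | succ a ih =>
      rw [sum_range_succ, ih (by omega)]
      have hcc : (m + 1).choose (a + 1) = m.choose a + m.choose (a + 1) :=
        Nat.choose_succ_succ m a
      rw [hcc]
      push_cast
      ring

lemma coeff_eq (m a : ℕ) (h : a ≤ m) :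
    ∑ p ∈ range (a + 1), (-1 : ℂ) ^ p * ((p ! : ℂ) * ((m - p + 1)! : ℂ))⁻¹
      = (-1 : ℂ) ^ a * (m.choose a) * (((m + 1)! : ℂ))⁻¹ := by
  have key : ∀ p ∈ range (a + 1), (-1 : ℂ) ^ p * ((p ! : ℂ) * ((m - p + 1)! : ℂ))⁻¹
      = ((-1 : ℂ) ^ p * ((m + 1).choose p)) * (((m + 1)! : ℂ))⁻¹ := by
    intro p hp
    rw [mem_range] at hp
    have hpm : p ≤ m := by omega
    have hfact : (m + 1).choose p * p ! * (m + 1 - p)! = (m + 1)! :=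
      Nat.choose_mul_factorial_mul_factorial (by omega)
    have h2 : m - p + 1 = m + 1 - p := by omega
    have hc : ((m + 1).choose p : ℂ) * (p ! : ℂ) * ((m + 1 - p)! : ℂ) = ((m + 1)! : ℂ) := by
      exact_mod_cast congrArg (Nat.cast : ℕ → ℂ) hfact
    have hp0 : (p ! : ℂ) ≠ 0 := Nat.cast_ne_zero.mpr p.factorial_ne_zero
    have hq0 : ((m + 1 - p)! : ℂ) ≠ 0 := Nat.cast_ne_zero.mpr (m + 1 - p).factorial_ne_zero
    have hm0 : ((m + 1)! : ℂ) ≠ 0 := Nat.cast_ne_zero.mpr (m + 1).factorial_ne_zero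
    rw [h2]
    have : ((p ! : ℂ) * ((m + 1 - p)! : ℂ))⁻¹ = ((m + 1).choose p) * (((m + 1)! : ℂ))⁻¹ := by
      field_simp
      linear_combination -hc
    rw [this]
    ring
  rw [sum_congr rfl key, ← sum_mul]
  have hz := alt_sum_int m a h
  have hz' : ∑ p ∈ range (a + 1), (-1 : ℂ) ^ p * ((m + 1).choose p)
      = (-1 : ℂ) ^ a * m.choose a := by exact_mod_cast congrArg (Int.cast : ℤ → ℂ) hz
  rw [hz']

lemma iterate_eq (A H : 𝔸) (k : ℕ) :
    (fun X => -(A * X - X * A))^[k] H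
      = ((LinearMap.mulRight ℂ A - LinearMap.mulLeft ℂ A) ^ k) H := by
  induction k with
  | zero => simp
  | succ k ih =>
      rw [Function.iterate_succ_apply', ih, pow_succ', Module.End.mul_apply,
        LinearMap.sub_apply, LinearMap.mulRight_apply, LinearMap.mulLeft_apply, neg_sub]

lemma ad_pow_expand (A H : 𝔸) (k : ℕ) :
    ((LinearMap.mulRight ℂ A - LinearMap.mulLeft ℂ A) ^ k) H
      = ∑ j ∈ range (k + 1), ((-1 : ℂ) ^ j * (k.choose j)) • (A ^ j * H * A ^ (k - j)) := by
  have hc : Commute (LinearMap.mulRight ℂ A) (-(LinearMap.mulLeft ℂ A)) :=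
    ((LinearMap.commute_mulLeft_right A A).symm).neg_right
  rw [sub_eq_add_neg, hc.add_pow, LinearMap.sum_apply]
  have hterm : ∀ j ∈ range (k + 1),
      ((LinearMap.mulRight ℂ A) ^ j * (-(LinearMap.mulLeft ℂ A)) ^ (k - j)
          * ((k.choose j : ℕ) : Module.End ℂ 𝔸)) H
        = ((-1 : ℂ) ^ (k - j) * (k.choose j)) • (A ^ (k - j) * H * A ^ j) := by
    intro j hj
    have h1 : (-(LinearMap.mulLeft ℂ A)) ^ (k - j)
        = ((-1 : ℂ) ^ (k - j)) • (LinearMap.mulLeft ℂ A) ^ (k - j) := by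
      rw [← neg_one_smul ℂ (LinearMap.mulLeft ℂ A), smul_pow]
    rw [Module.End.mul_apply, Module.End.mul_apply, Module.End.natCast_apply, h1,
      LinearMap.smul_apply, LinearMap.pow_mulLeft, LinearMap.pow_mulRight,
      LinearMap.mulLeft_apply, LinearMap.mulRight_apply]
    rw [← Nat.cast_smul_eq_nsmul ℂ (k.choose j) H]
    simp only [mul_smul_comm, smul_mul_assoc, smul_smul, mul_assoc]
  rw [sum_congr rfl hterm, ← Finset.sum_range_reflect]
  refine sum_congr rfl fun j hj => ?_
  rw [mem_range] at hj
  simp only [Nat.add_sub_cancel]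
  have h2 : k - (k - j) = j := by omega
  rw [h2, Nat.choose_symm (by omega : j ≤ k)]

noncomputable def pd (m : ℕ) (X : 𝔸) : 𝔸 →L[ℂ] 𝔸 :=
  ∑ i ∈ range m, (ContinuousLinearMap.mul ℂ 𝔸 (X ^ i)).comp
      ((ContinuousLinearMap.mul ℂ 𝔸).flip (X ^ (m - 1 - i)))

lemma pd_apply (m : ℕ) (X H : 𝔸) :
    pd m X H = ∑ i ∈ range m, X ^ i * H * X ^ (m - 1 - i) := by
  simp [pd, ContinuousLinearMap.sum_apply, mul_assoc]

lemma hasFDerivAt_pow (m : ℕ) (X : 𝔸) :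
    HasFDerivAt (fun Y : 𝔸 => Y ^ m) (pd m X) X := by
  induction m with
  | zero =>
      have h : (fun Y : 𝔸 => Y ^ 0) = fun _ => (1 : 𝔸) := funext fun Y => pow_zero Y
      have h2 : pd 0 X = 0 := by simp [pd]
      rw [h, h2]
      exact hasFDerivAt_const _ _
  | succ m ih =>
      have h : (fun Y : 𝔸 => Y ^ (m + 1)) = fun Y => Y ^ m * Y := funext fun Y => pow_succ Y m
      rw [h]
      have := ih.mul' (hasFDerivAt_id X)
      convert this using 1
      · rfl
      · rfl
      ext H
      simp only [ContinuousLinearMap.add_apply, ContinuousLinearMap.smul_apply,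
        ContinuousLinearMap.coe_id', id, ContinuousLinearMap.smulRight_apply, smul_eq_mul,
        pd_apply, MulOpposite.smul_eq_mul_unop, MulOpposite.unop_op]
      rw [Finset.sum_range_succ, Finset.sum_mul]
      have h3 : ∀ i ∈ range m, X ^ i * H * X ^ (m - 1 - i) * X = X ^ i * H * X ^ (m - i) := by
        intro i hi
        rw [mem_range] at hi
        rw [mul_assoc, ← pow_succ]
        congr 2
        omega
      rw [sum_congr rfl h3]
      simp [add_comm]

lemma norm_pd_le {R : ℝ} (hR : 1 ≤ R) (m : ℕ) (X : 𝔸) (hX : ‖X‖ ≤ R) :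
    ‖pd m X‖ ≤ m * R ^ m := by
  refine ContinuousLinearMap.opNorm_le_bound _ (by positivity) fun H => ?_
  rw [pd_apply]
  calc ‖∑ i ∈ range m, X ^ i * H * X ^ (m - 1 - i)‖
      ≤ ∑ i ∈ range m, ‖X ^ i * H * X ^ (m - 1 - i)‖ := norm_sum_le _ _
    _ ≤ ∑ i ∈ range m, R ^ m * ‖H‖ := by
        refine sum_le_sum fun i hi => ?_
        rw [mem_range] at hi
        have h1 := norm_conj_le X H i (m - 1 - i)
        have h2 : ‖X‖ ^ i * ‖H‖ * ‖X‖ ^ (m - 1 - i) ≤ R ^ i * ‖H‖ * R ^ (m - 1 - i) := by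
          gcongr
        have h3 : R ^ i * ‖H‖ * R ^ (m - 1 - i) = R ^ (i + (m - 1 - i)) * ‖H‖ := by
          rw [pow_add]; ring
        have h4 : R ^ (i + (m - 1 - i)) ≤ R ^ m := pow_le_pow_right₀ hR (by omega)
        have h5 : R ^ (i + (m - 1 - i)) * ‖H‖ ≤ R ^ m * ‖H‖ :=
          mul_le_mul_of_nonneg_right h4 (norm_nonneg H)
        linarith
    _ = m * R ^ m * ‖H‖ := by rw [sum_const, card_range, nsmul_eq_mul]; ring

lemma summable_aux {R : ℝ} (hR : 0 ≤ R) :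
    Summable (fun m : ℕ => (m ! : ℝ)⁻¹ * (m * R ^ m)) := by
  rw [← summable_nat_add_iff 1]
  refine ((Real.summable_pow_div_factorial R).mul_left R).congr fun m => ?_
  have h0 : (m ! : ℝ) ≠ 0 := Nat.cast_ne_zero.mpr m.factorial_ne_zero
  rw [Nat.factorial_succ]
  push_cast
  field_simp
  ring

section Complete

variable [CompleteSpace 𝔸]

lemma norm_term_le {R : ℝ} (hR : 1 ≤ R) (m : ℕ) (X : 𝔸) (hX : ‖X‖ ≤ R) :
    ‖(m ! : ℂ)⁻¹ • pd m X‖ ≤ (m ! : ℝ)⁻¹ * (m * R ^ m) := by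
  rw [norm_smul ((m ! : ℂ))⁻¹ (pd m X)]
  have h1 : ‖((m ! : ℂ))⁻¹‖ = (m ! : ℝ)⁻¹ := by
    rw [norm_inv]
    norm_num
  rw [h1]
  exact mul_le_mul_of_nonneg_left (norm_pd_le hR m X hX) (by positivity)

lemma summable_pd (A : 𝔸) : Summable fun m : ℕ => (m ! : ℂ)⁻¹ • pd m A := by
  set R : ℝ := ‖A‖ + 1 with hRdef
  have hR : 1 ≤ R := by rw [hRdef]; linarith [norm_nonneg A]
  refine Summable.of_norm (Summable.of_nonneg_of_le (fun m => norm_nonneg _)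
    (fun m => norm_term_le hR m A (by rw [hRdef]; linarith)) (summable_aux (by linarith)))

lemma hasFDerivAt_exp' (A : 𝔸) :
    HasFDerivAt (NormedSpace.exp) (∑' m : ℕ, (m ! : ℂ)⁻¹ • pd m A) A := by
  set R : ℝ := ‖A‖ + 1 with hRdef
  have hR : 1 ≤ R := by rw [hRdef]; linarith [norm_nonneg A]
  have hball : A ∈ Metric.ball (0 : 𝔸) R := by
    rw [Metric.mem_ball, dist_zero_right]
    simp [hRdef]
  have hmain := hasFDerivAt_tsum_of_isPreconnected
    (u := fun m : ℕ => (m ! : ℝ)⁻¹ * (m * R ^ m))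
    (f := fun (m : ℕ) (X : 𝔸) => (m ! : ℂ)⁻¹ • X ^ m)
    (f' := fun (m : ℕ) (X : 𝔸) => (m ! : ℂ)⁻¹ • pd m X)
    (summable_aux (by linarith)) Metric.isOpen_ball (convex_ball (0:𝔸) R).isPreconnected
    (fun m X _ => (hasFDerivAt_pow m X).const_smul ((m ! : ℂ))⁻¹)
    (fun m X hXb => by
      have hx : ‖X‖ ≤ R := by
        rw [Metric.mem_ball, dist_zero_right] at hXb
        linarith
      exact norm_term_le hR m X hx)
    (Metric.mem_ball_self (by linarith)) (NormedSpace.expSeries_summable' (𝕂 := ℂ) (0 : 𝔸))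
    hball
  rw [NormedSpace.exp_eq_tsum (𝕂 := ℂ)]
  exact hmain

end Complete

lemma P_eq_M (A H : 𝔸) (m : ℕ) :
    ∑ pq ∈ Finset.HasAntidiagonal.antidiagonal m,
        (((pq.1)! : ℂ)⁻¹ • (-A) ^ pq.1) *
          ((((pq.2 + 1)! : ℂ))⁻¹ • ∑ i ∈ range (pq.2 + 1), A ^ i * H * A ^ (pq.2 - i))
      = ∑ ab ∈ Finset.HasAntidiagonal.antidiagonal m,
          ((-1 : ℂ) ^ ab.1 * (m.choose ab.1) * (((m + 1)! : ℂ))⁻¹) •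
            (A ^ ab.1 * H * A ^ ab.2) := by
  rw [Finset.Nat.sum_antidiagonal_eq_sum_range_succ_mk,
    Finset.Nat.sum_antidiagonal_eq_sum_range_succ_mk]
  have hL : ∀ p ∈ range (m + 1),
      (((p)! : ℂ)⁻¹ • (-A) ^ p) *
          ((((m - p + 1)! : ℂ))⁻¹ • ∑ i ∈ range (m - p + 1), A ^ i * H * A ^ (m - p - i))
        = ∑ i ∈ range (m - p + 1),
            ((-1 : ℂ) ^ p * ((p ! : ℂ) * ((m - p + 1)! : ℂ))⁻¹) •
              (A ^ (p + i) * H * A ^ (m - p - i)) := by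
    intro p _
    have hA : (-A) ^ p = ((-1 : ℂ) ^ p) • A ^ p := by
      rw [← neg_one_smul ℂ A, smul_pow]
    rw [hA, smul_smul, smul_mul_smul_comm, Finset.mul_sum, Finset.smul_sum]
    refine sum_congr rfl fun i _ => ?_
    congr 1
    · rw [mul_inv]; ring
    · rw [pow_add]; noncomm_ring
  have hRr : ∀ a ∈ range (m + 1),
      ((-1 : ℂ) ^ a * (m.choose a) * (((m + 1)! : ℂ))⁻¹) • (A ^ a * H * A ^ (m - a))
        = ∑ p ∈ range (a + 1),
            ((-1 : ℂ) ^ p * ((p ! : ℂ) * ((m - p + 1)! : ℂ))⁻¹) •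
              (A ^ a * H * A ^ (m - a)) := by
    intro a ha
    rw [mem_range] at ha
    rw [← Finset.sum_smul, coeff_eq m a (by omega)]
  rw [sum_congr rfl hL, sum_congr rfl hRr, Finset.sum_sigma', Finset.sum_sigma']
  refine sum_nbij' (i := fun x => (⟨x.1 + x.2, x.1⟩ : Σ _ : ℕ, ℕ))
    (j := fun x => (⟨x.2, x.1 - x.2⟩ : Σ _ : ℕ, ℕ)) ?_ ?_ ?_ ?_ ?_
  · intro x hx
    simp only [mem_sigma, mem_range] at hx ⊢
    omega
  · intro x hx
    simp only [mem_sigma, mem_range] at hx ⊢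
    omega
  · rintro ⟨a, b⟩ hx
    simp only [mem_sigma, mem_range] at hx
    show (⟨a, a + b - a⟩ : Σ _ : ℕ, ℕ) = ⟨a, b⟩
    have h : a + b - a = b := by omega
    rw [h]
  · rintro ⟨a, b⟩ hx
    simp only [mem_sigma, mem_range] at hx
    show (⟨b + (a - b), b⟩ : Σ _ : ℕ, ℕ) = ⟨a, b⟩
    have h : b + (a - b) = a := by omega
    rw [h]
  · intro x hx
    simp only [mem_sigma, mem_range] at hx
    rw [Nat.sub_sub]

section Complete2

variable [CompleteSpace 𝔸]

theorem duhamel_core (A H : 𝔸) :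
    HasSum
      (fun k : ℕ => (((k + 1)! : ℂ))⁻¹ •
        ((fun X => -(A * X - X * A))^[k] H))
      (NormedSpace.exp (-A) * ((∑' m : ℕ, (m ! : ℂ)⁻¹ • pd m A) H)) ∧
    Summable
      (fun k : ℕ => ‖(((k + 1)! : ℂ))⁻¹ •
        ((fun X => -(A * X - X * A))^[k] H)‖) := by
  -- step A : rewrite the target terms
  have hTM : ∀ k : ℕ, (((k + 1)! : ℂ))⁻¹ • ((fun X => -(A * X - X * A))^[k] H)
      = ∑ ab ∈ Finset.HasAntidiagonal.antidiagonal k,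
          ((-1 : ℂ) ^ ab.1 * (k.choose ab.1) * (((k + 1)! : ℂ))⁻¹) •
            (A ^ ab.1 * H * A ^ ab.2) := by
    intro k
    rw [iterate_eq, ad_pow_expand, Finset.Nat.sum_antidiagonal_eq_sum_range_succ_mk,
      Finset.smul_sum]
    refine sum_congr rfl fun j _ => ?_
    rw [smul_smul]
    congr 1
    ring
  -- step B : norm bound for the target terms
  have hw : ∀ k : ℕ, ‖(((k + 1)! : ℂ))⁻¹ • ((fun X => -(A * X - X * A))^[k] H)‖
      ≤ (2 * ‖A‖) ^ k / k ! * ‖H‖ := by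
    intro k
    rw [hTM k]
    have hbk : ∀ ab ∈ Finset.HasAntidiagonal.antidiagonal k,
        ‖((-1 : ℂ) ^ ab.1 * (k.choose ab.1) * (((k + 1)! : ℂ))⁻¹) •
            (A ^ ab.1 * H * A ^ ab.2)‖
          ≤ (k.choose ab.1 : ℝ) * ((k ! : ℝ)⁻¹ * (‖A‖ ^ k * ‖H‖)) := by
      intro ab hab
      rw [Finset.HasAntidiagonal.mem_antidiagonal] at hab
      rw [norm_smul]
      have hcoeff : ‖((-1 : ℂ) ^ ab.1 * (k.choose ab.1) * (((k + 1)! : ℂ))⁻¹)‖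
          = (k.choose ab.1 : ℝ) * (((k + 1)! : ℝ))⁻¹ := by
        rw [norm_mul, norm_mul, norm_pow, norm_neg, norm_one, one_pow, one_mul, norm_inv]
        norm_num
      rw [hcoeff]
      have h1 : ‖A ^ ab.1 * H * A ^ ab.2‖ ≤ ‖A‖ ^ k * ‖H‖ := by
        have := norm_conj_le A H ab.1 ab.2
        have h2 : ‖A‖ ^ ab.1 * ‖H‖ * ‖A‖ ^ ab.2 = ‖A‖ ^ k * ‖H‖ := by
          rw [← hab, pow_add]; ring
        linarith
      have h3 : (((k + 1)! : ℝ))⁻¹ ≤ ((k ! : ℝ))⁻¹ := by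
        have h4 : (k ! : ℝ) ≤ ((k + 1)! : ℝ) := by
          exact_mod_cast Nat.factorial_le (by omega)
        have h5 : (0 : ℝ) < k ! := by positivity
        exact inv_anti₀ h5 h4
      calc (k.choose ab.1 : ℝ) * (((k + 1)! : ℝ))⁻¹ * ‖A ^ ab.1 * H * A ^ ab.2‖
          ≤ (k.choose ab.1 : ℝ) * ((k ! : ℝ))⁻¹ * (‖A‖ ^ k * ‖H‖) := by
            have hnn : (0:ℝ) ≤ (k.choose ab.1 : ℝ) := by positivity
            refine mul_le_mul (mul_le_mul_of_nonneg_left h3 hnn) h1 (norm_nonneg _) (by positivity)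
        _ = (k.choose ab.1 : ℝ) * ((k ! : ℝ)⁻¹ * (‖A‖ ^ k * ‖H‖)) := by ring
    calc ‖∑ ab ∈ Finset.HasAntidiagonal.antidiagonal k, ((-1 : ℂ) ^ ab.1 * (k.choose ab.1) *
          (((k + 1)! : ℂ))⁻¹) • (A ^ ab.1 * H * A ^ ab.2)‖
        ≤ ∑ ab ∈ Finset.HasAntidiagonal.antidiagonal k,
            (k.choose ab.1 : ℝ) * ((k ! : ℝ)⁻¹ * (‖A‖ ^ k * ‖H‖)) :=
          (norm_sum_le _ _).trans (sum_le_sum hbk)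
      _ = (∑ ab ∈ Finset.HasAntidiagonal.antidiagonal k, (k.choose ab.1 : ℝ)) *
            ((k ! : ℝ)⁻¹ * (‖A‖ ^ k * ‖H‖)) := by rw [← Finset.sum_mul]
      _ = (2 * ‖A‖) ^ k / k ! * ‖H‖ := by
          have hch : ∑ ab ∈ Finset.HasAntidiagonal.antidiagonal k, (k.choose ab.1 : ℝ) = 2 ^ k := by
            rw [Finset.Nat.sum_antidiagonal_eq_sum_range_succ_mk]
            exact_mod_cast congrArg (Nat.cast : ℕ → ℝ) (Nat.sum_range_choose k)
          rw [hch, mul_pow]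
          ring
  have hTnorm : Summable (fun k : ℕ => ‖(((k + 1)! : ℂ))⁻¹ •
      ((fun X => -(A * X - X * A))^[k] H)‖) :=
    Summable.of_nonneg_of_le (fun k => norm_nonneg _) hw
      ((Real.summable_pow_div_factorial (2 * ‖A‖)).mul_right ‖H‖)
  refine ⟨?_, hTnorm⟩
  -- step D : the applied series
  have happly : HasSum (fun m : ℕ => (m ! : ℂ)⁻¹ • (pd m A H))
      ((∑' m : ℕ, (m ! : ℂ)⁻¹ • pd m A) H) := by
    have h := (summable_pd A).hasSum.mapL (ContinuousLinearMap.apply ℂ 𝔸 H)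
    simpa using h
  -- step E : shift by one
  have hc : HasSum (fun q : ℕ => (((q + 1)! : ℂ))⁻¹ •
      ∑ i ∈ range (q + 1), A ^ i * H * A ^ (q - i))
      ((∑' m : ℕ, (m ! : ℂ)⁻¹ • pd m A) H) := by
    have h0 : (fun q : ℕ => (((q + 1)! : ℂ))⁻¹ •
        ∑ i ∈ range (q + 1), A ^ i * H * A ^ (q - i))
        = fun q : ℕ => ((q + 1)! : ℂ)⁻¹ • (pd (q + 1) A H) := by
      funext q
      rw [pd_apply]
      simp only [Nat.add_sub_cancel]
    rw [h0]
    refine (hasSum_nat_add_iff (f := fun m : ℕ => (m ! : ℂ)⁻¹ • (pd m A H)) 1).mpr ?_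
    have hz : pd 0 A H = 0 := by simp [pd_apply]
    simpa [hz] using happly
  -- step G : Cauchy product
  have hf_norm : Summable fun p : ℕ => ‖(p ! : ℂ)⁻¹ • (-A) ^ p‖ :=
    NormedSpace.norm_expSeries_summable' (-A)
  have hc_norm : Summable fun q : ℕ => ‖(((q + 1)! : ℂ))⁻¹ •
      ∑ i ∈ range (q + 1), A ^ i * H * A ^ (q - i)‖ := by
    refine Summable.of_nonneg_of_le (fun q => norm_nonneg _) (fun q => ?_)
      ((Real.summable_pow_div_factorial ‖A‖).mul_right ‖H‖)
    rw [norm_smul]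
    have hcoeff : ‖(((q + 1)! : ℂ))⁻¹‖ = (((q + 1)! : ℝ))⁻¹ := by
      rw [norm_inv]; norm_num
    rw [hcoeff]
    have h1 : ‖∑ i ∈ range (q + 1), A ^ i * H * A ^ (q - i)‖
        ≤ (q + 1 : ℝ) * (‖A‖ ^ q * ‖H‖) := by
      calc ‖∑ i ∈ range (q + 1), A ^ i * H * A ^ (q - i)‖
          ≤ ∑ i ∈ range (q + 1), ‖A ^ i * H * A ^ (q - i)‖ := norm_sum_le _ _
        _ ≤ ∑ i ∈ range (q + 1), ‖A‖ ^ q * ‖H‖ := by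
            refine sum_le_sum fun i hi => ?_
            rw [mem_range] at hi
            have := norm_conj_le A H i (q - i)
            have h2 : ‖A‖ ^ i * ‖H‖ * ‖A‖ ^ (q - i) = ‖A‖ ^ q * ‖H‖ := by
              rw [show q = i + (q - i) by omega, pow_add]
              ring_nf
              rw [show i + (q - i) - i = q - i by omega]
            linarith
        _ = (q + 1 : ℝ) * (‖A‖ ^ q * ‖H‖) := by
            rw [sum_const, card_range, nsmul_eq_mul]
            push_cast
            ring
    calc (((q + 1)! : ℝ))⁻¹ * ‖∑ i ∈ range (q + 1), A ^ i * H * A ^ (q - i)‖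
        ≤ (((q + 1)! : ℝ))⁻¹ * ((q + 1 : ℝ) * (‖A‖ ^ q * ‖H‖)) :=
          mul_le_mul_of_nonneg_left h1 (by positivity)
      _ = ‖A‖ ^ q / q ! * ‖H‖ := by
          rw [Nat.factorial_succ]
          have h0 : (q ! : ℝ) ≠ 0 := Nat.cast_ne_zero.mpr q.factorial_ne_zero
          push_cast
          field_simp
  have hprod := tsum_mul_tsum_eq_tsum_sum_antidiagonal_of_summable_norm hf_norm hc_norm
  -- step H : conclude
  have hTsum : Summable (fun k : ℕ => (((k + 1)! : ℂ))⁻¹ •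
      ((fun X => -(A * X - X * A))^[k] H)) := Summable.of_norm hTnorm
  refine (Summable.hasSum_iff hTsum).mpr ?_
  rw [← hc.tsum_eq, NormedSpace.exp_eq_tsum (𝕂 := ℂ), hprod]
  refine tsum_congr fun m => ?_
  rw [hTM m, ← P_eq_M A H m]


theorem duhamel (Ω Ω' : ℝ → 𝔸) (hΩ : ∀ t, HasDerivAt Ω (Ω' t) t) (t : ℝ) :
    HasSum
      (fun k : ℕ => (((k + 1)! : ℂ))⁻¹ •
        ((fun X => -(Ω t * X - X * Ω t))^[k] (Ω' t)))
      (NormedSpace.exp (-(Ω t)) * deriv (fun u => NormedSpace.exp (Ω u)) t) ∧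
    Summable
      (fun k : ℕ => ‖(((k + 1)! : ℂ))⁻¹ •
        ((fun X => -(Ω t * X - X * Ω t))^[k] (Ω' t))‖) := by
  have hfd : HasDerivAt (fun u => NormedSpace.exp (Ω u))
      ((∑' m : ℕ, (m ! : ℂ)⁻¹ • pd m (Ω t)) (Ω' t)) t := by
    simpa [Function.comp_def] using
      ((hasFDerivAt_exp' (Ω t)).restrictScalars ℝ).comp_hasDerivAt t (hΩ t)
  rw [hfd.deriv]
  exact duhamel_core (Ω t) (Ω' t)

end Complete2

end DuhamelAux

/-- if `Ω : ℝ → Mₙ(ℂ)` is differentiable with derivative `Ω'`, then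
`exp(−Ω(t)) · (d/dt exp(Ω(t))) = Σ_{k=0}^∞ (1/(k+1)!) (−ad_{Ω(t)})^k (Ω'(t))`,
the series converging absolutely in operator norm. -/
theorem exp_neg_mul_deriv_exp_eq_ad_series {n : ℕ} (Ω Ω' : ℝ → Matrix (Fin n) (Fin n) ℂ)
    (hΩ : ∀ t, HasDerivAt Ω (Ω' t) t) (t : ℝ) :
    HasSum
      (fun k : ℕ => (((k + 1)! : ℂ))⁻¹ •
        ((fun X => -(Ω t * X - X * Ω t))^[k] (Ω' t)))
      (NormedSpace.exp (-(Ω t)) * deriv (fun u => NormedSpace.exp (Ω u)) t) ∧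
    Summable
      (fun k : ℕ => ‖(((k + 1)! : ℂ))⁻¹ •
        ((fun X => -(Ω t * X - X * Ω t))^[k] (Ω' t))‖) :=
  DuhamelAux.duhamel Ω Ω' hΩ t
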